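/- Let A and B be n×n complex matrices. If exp(t(A+B)) = exp(tA)·exp(tB) holds for all t in an open neighborhood of 0 in ℂ (equivalently, all real t), then AB = BA. -/

import Mathlib

open Matrix NormedSpace

attribute [local instance] Matrix.linftyOpNormedRing Matrix.linftyOpNormedAlgebra

private lemma comp_ofReal'' {E : Type*} [NormedAddCommGroup E] [NormedSpace ℂ E]
    {e : ℂ → E} {e' : E} {z : ℝ} (hf : HasDerivAt e e' (z : ℂ)) :
    HasDerivAt (fun y : ℝ => e y) e' z := by
  simpa [Function.comp_def] using HasDerivAt.scomp z hf Complex.ofRealCLM.hasDerivAt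

private lemma key_deriv {n : ℕ} (M : Matrix (Fin n) (Fin n) ℂ) (t : ℝ) :
    HasDerivAt (fun s : ℝ => exp ((s : ℂ) • M)) (exp ((t : ℂ) • M) * M) t :=
  comp_ofReal'' (hasDerivAt_exp_smul_const (𝕂 := ℂ) M (t : ℂ))

theorem stmt_1 {n : ℕ} (A B : Matrix (Fin n) (Fin n) ℂ)
    (h : ∀ t : ℝ, exp ((t : ℂ) • (A + B)) = exp ((t : ℂ) • A) * exp ((t : ℂ) • B)) :
    A * B = B * A := by
  -- first derivative identity
  have h1 : ∀ t : ℝ, exp ((t : ℂ) • (A + B)) * (A + B)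
      = exp ((t : ℂ) • A) * A * exp ((t : ℂ) • B)
        + exp ((t : ℂ) • A) * (exp ((t : ℂ) • B) * B) := by
    intro t
    have hf : HasDerivAt (fun s : ℝ => exp ((s : ℂ) • A) * exp ((s : ℂ) • B))
        (exp ((t : ℂ) • (A + B)) * (A + B)) t := by
      have := key_deriv (A + B) t
      simpa only [funext h] using this
    have hg := (key_deriv A t).mul (key_deriv B t)
    exact hf.unique hg
  -- second derivative at 0
  have hf2 : HasDerivAt (fun s : ℝ => exp ((s : ℂ) • (A + B)) * (A + B))
      (exp (((0 : ℝ) : ℂ) • (A + B)) * (A + B) * (A + B)) 0 :=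
    (key_deriv (A + B) 0).mul_const (A + B)
  have hg2 : HasDerivAt (fun s : ℝ => exp ((s : ℂ) • A) * A * exp ((s : ℂ) • B)
        + exp ((s : ℂ) • A) * (exp ((s : ℂ) • B) * B))
      ((exp (((0 : ℝ) : ℂ) • A) * A * A) * exp (((0 : ℝ) : ℂ) • B)
        + exp (((0 : ℝ) : ℂ) • A) * A * (exp (((0 : ℝ) : ℂ) • B) * B)
        + ((exp (((0 : ℝ) : ℂ) • A) * A) * (exp (((0 : ℝ) : ℂ) • B) * B)
          + exp (((0 : ℝ) : ℂ) • A) * ((exp (((0 : ℝ) : ℂ) • B) * B) * B))) 0 :=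
    (((key_deriv A 0).mul_const A).mul (key_deriv B 0)).add
      ((key_deriv A 0).mul ((key_deriv B 0).mul_const B))
  have hf2' : HasDerivAt (fun s : ℝ => exp ((s : ℂ) • A) * A * exp ((s : ℂ) • B)
        + exp ((s : ℂ) • A) * (exp ((s : ℂ) • B) * B))
      (exp (((0 : ℝ) : ℂ) • (A + B)) * (A + B) * (A + B)) 0 := by
    simpa only [funext h1] using hf2
  have h2 := hf2'.unique hg2
  simp only [Complex.ofReal_zero, zero_smul, exp_zero, one_mul, mul_one] at h2
  have h3 : A * A + A * B + (B * A + B * B)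
      = A * A + A * B + (A * B + B * B) := by
    rw [← h2]; noncomm_ring
  have h4 := add_left_cancel h3
  exact (add_right_cancel h4).symm
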